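/- Segment-Filling Fact: let S ⊆ ℝ² be a closed set, not contained in any affine line, that contains its circle centers. Suppose there are two perpendicular lines L₁ and L₂ such that S contains the point of intersection I of L₁ and L₂, another point A on L₁ with A ≠ I, and a sequence of points P₁, P₂, … lying on L₂, all distinct from I, that converges to I. Then S contains the entire closed line segment from A to I. -/

import Mathlib

open Real EuclideanGeometry

/-- A set in the Euclidean plane contains its circle centers if, whenever it contains
three non-collinear points, it contains the point equidistant from all three
(the circumcenter of the triangle they form). -/
def ContainsCircleCenters (S : Set (EuclideanSpace ℝ (Fin 2))) : Prop :=
  ∀ A ∈ S, ∀ B ∈ S, ∀ C ∈ S,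
    ¬ Collinear ℝ ({A, B, C} : Set (EuclideanSpace ℝ (Fin 2))) →
    ∀ O : EuclideanSpace ℝ (Fin 2),
      dist O A = dist O B → dist O A = dist O C → O ∈ S

namespace SegFill

/-- A real number `c` is *good* if there is a sequence of points of `S`, distinct from
`I + c • v`, lying on the perpendicular to `v` through `I + c • v`, converging to it. -/
def Good (S : Set (EuclideanSpace ℝ (Fin 2))) (I v : EuclideanSpace ℝ (Fin 2)) (c : ℝ) : Prop :=
  ∃ Z : ℕ → EuclideanSpace ℝ (Fin 2), (∀ n, Z n ∈ S) ∧ (∀ n, Z n ≠ I + c • v) ∧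
    (∀ n, (inner ℝ (Z n - (I + c • v)) v : ℝ) = 0) ∧
    Filter.Tendsto Z Filter.atTop (nhds (I + c • v))

lemma norm_helper (v e : EuclideanSpace ℝ (Fin 2)) (a b a' b' : ℝ)
    (h : (inner ℝ e v : ℝ) = 0) (ha : a^2 = a'^2) (hb : b^2 = b'^2) :
    ‖a • v + b • e‖ = ‖a' • v + b' • e‖ := by
  have key : ∀ x y : ℝ, ‖x • v + y • e‖^2 = x^2 * ‖v‖^2 + y^2 * ‖e‖^2 := by
    intro x y
    rw [norm_add_sq_real, norm_smul, norm_smul, real_inner_smul_left, real_inner_smul_right,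
      real_inner_comm, h]
    simp [mul_pow]
  have h1 : ‖a • v + b • e‖^2 = ‖a' • v + b' • e‖^2 := by rw [key, key, ha, hb]
  nlinarith [norm_nonneg (a • v + b • e), norm_nonneg (a' • v + b' • e)]

lemma noncol (I v e : EuclideanSpace ℝ (Fin 2)) (s c : ℝ) (hv : v ≠ 0) (hsc : s ≠ c)
    (he : e ≠ 0) (hev : (inner ℝ e v : ℝ) = 0) :
    ¬ Collinear ℝ ({I + s•v, I + c•v, (I + c•v) + e} : Set (EuclideanSpace ℝ (Fin 2))) := by
  intro hcol
  rw [collinear_iff_of_mem (Set.mem_insert_of_mem _ (Set.mem_insert _ _))] at hcol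
  obtain ⟨u, hu⟩ := hcol
  obtain ⟨r1, hr1⟩ := hu (I + s•v) (Set.mem_insert _ _)
  obtain ⟨r2, hr2⟩ := hu ((I + c•v) + e) (Set.mem_insert_of_mem _ (Set.mem_insert_of_mem _ rfl))
  rw [vadd_eq_add] at hr1 hr2
  have h1 : (s - c) • v = r1 • u := by linear_combination (norm := module) hr1
  have h2 : e = r2 • u := by linear_combination (norm := module) hr2
  have hr1ne : r1 ≠ 0 := by
    rintro rfl
    simp only [zero_smul] at h1
    exact hv (by simpa [sub_eq_zero, smul_eq_zero, sub_ne_zero.2 hsc] using h1)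
  have hu' : u = (r1⁻¹ * (s - c)) • v := by
    rw [mul_smul, h1, inv_smul_smul₀ hr1ne]
  have he' : e = (r2 * (r1⁻¹ * (s - c))) • v := by rw [h2, hu', smul_smul]
  have : (r2 * (r1⁻¹ * (s - c))) * (inner ℝ v v : ℝ) = 0 := by
    rw [← real_inner_smul_left, ← he', hev]
  rcases mul_eq_zero.1 this with h | h
  · exact he (by rw [he', h, zero_smul])
  · exact hv (inner_self_eq_zero.1 h)

lemma good_mem {S : Set (EuclideanSpace ℝ (Fin 2))} {I v : EuclideanSpace ℝ (Fin 2)} {c : ℝ}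
    (hclosed : IsClosed S) (hg : Good S I v c) : I + c • v ∈ S := by
  obtain ⟨Z, hZS, -, -, hZlim⟩ := hg
  exact hclosed.mem_of_tendsto hZlim (Filter.Eventually.of_forall hZS)

/-- The key circumcenter step. -/
lemma step {S : Set (EuclideanSpace ℝ (Fin 2))} {I v : EuclideanSpace ℝ (Fin 2)} {c s : ℝ}
    (hclosed : IsClosed S) (hcc : ContainsCircleCenters S) (hv : v ≠ 0)
    (hg : Good S I v c) (hs : I + s • v ∈ S) : Good S I v ((s + c)/2) := by
  by_cases hsc : s = c
  · subst hsc
    have : (s + s) / 2 = s := by ring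
    rw [this]; exact hg
  obtain ⟨Z, hZS, hZne, hZperp, hZlim⟩ := hg
  set m : ℝ := (s + c)/2 with hm
  set Xc := I + c • v with hXc
  set Xm := I + m • v with hXm
  refine ⟨fun n => Xm + (1/2 : ℝ) • (Z n - Xc), ?_, ?_, ?_, ?_⟩
  · intro n
    set e := Z n - Xc with hedef
    have heZ : Z n = Xc + e := by rw [hedef]; abel
    have he0 : e ≠ 0 := sub_ne_zero.2 (hZne n)
    have hev : (inner ℝ e v : ℝ) = 0 := hZperp n
    have hO1 : Xm + (1/2 : ℝ) • e - (I + s • v) = (m - s) • v + (1/2 : ℝ) • e := by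
      rw [hXm]; module
    have hO2 : Xm + (1/2 : ℝ) • e - Xc = (m - c) • v + (1/2 : ℝ) • e := by
      rw [hXm, hXc]; module
    have hO3 : Xm + (1/2 : ℝ) • e - Z n = (m - c) • v + (-(1/2) : ℝ) • e := by
      rw [heZ, hXm, hXc]; module
    have d12 : dist (Xm + (1/2 : ℝ) • e) (I + s • v) = dist (Xm + (1/2 : ℝ) • e) Xc := by
      rw [dist_eq_norm, dist_eq_norm, hO1, hO2]
      exact norm_helper v e _ _ _ _ hev (by rw [hm]; ring) rfl
    have d13 : dist (Xm + (1/2 : ℝ) • e) (I + s • v) = dist (Xm + (1/2 : ℝ) • e) (Z n) := by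
      rw [dist_eq_norm, dist_eq_norm, hO1, hO3]
      exact norm_helper v e _ _ _ _ hev (by rw [hm]; ring) (by ring)
    have hnc : ¬ Collinear ℝ ({I + s • v, Xc, Z n} : Set (EuclideanSpace ℝ (Fin 2))) := by
      rw [heZ]
      exact noncol I v e s c hv hsc he0 hev
    exact hcc (I + s • v) hs Xc (good_mem hclosed ⟨Z, hZS, hZne, hZperp, hZlim⟩) (Z n) (hZS n)
      hnc _ d12 d13
  · intro n h
    apply hZne n
    have : (1/2 : ℝ) • (Z n - Xc) = 0 := by
      have := congrArg (fun x => x - Xm) h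
      simpa [hXm] using this
    have : Z n - Xc = 0 := by
      have h2 := congrArg (fun x => (2:ℝ) • x) this
      simpa [smul_smul] using h2
    rw [hXc] at this
    rw [sub_eq_zero.1 this]
  · intro n
    rw [show Xm + (1/2 : ℝ) • (Z n - Xc) - (I + m • v) = (1/2 : ℝ) • (Z n - Xc) by
      rw [hXm]; abel]
    rw [real_inner_smul_left, hZperp n, mul_zero]
  · have h1 : Filter.Tendsto (fun n => Xm + (1/2 : ℝ) • (Z n - Xc)) Filter.atTop
        (nhds (Xm + (1/2 : ℝ) • (Xc - Xc))) := by
      exact Filter.Tendsto.const_add _ (((hZlim.sub tendsto_const_nhds).const_smul _))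
    simpa using h1

end SegFill

/-- Segment-Filling Fact: if a closed circle-center set S contains a point I,
another point A ≠ I (so that I and A lie on a line L₁), and a sequence of points
distinct from I lying on the line L₂ through I perpendicular to L₁ that converges
to I, then S contains the whole closed segment from A to I. -/
theorem segment_filling_fact (S : Set (EuclideanSpace ℝ (Fin 2)))
    (hclosed : IsClosed S) (hline : ¬ Collinear ℝ S) (hcc : ContainsCircleCenters S)
    (I A : EuclideanSpace ℝ (Fin 2)) (hI : I ∈ S) (hA : A ∈ S) (hAI : A ≠ I)
    (P : ℕ → EuclideanSpace ℝ (Fin 2))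
    (hPS : ∀ n, P n ∈ S) (hPI : ∀ n, P n ≠ I)
    (hperp : ∀ n, (inner ℝ (P n - I) (A - I) : ℝ) = 0)
    (hlim : Filter.Tendsto P Filter.atTop (nhds I)) :
    segment ℝ A I ⊆ S := by
  set v := A - I with hv
  have hvne : v ≠ 0 := sub_ne_zero.2 hAI
  have hIv : I + (0:ℝ) • v = I := by simp
  have good0 : SegFill.Good S I v 0 := by
    refine ⟨P, hPS, ?_, ?_, ?_⟩ <;> simp only [hIv]
    · exact hPI
    · exact hperp
    · exact hlim
  have hT1 : I + (1:ℝ) • v ∈ S := by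
    rw [one_smul, hv]; simpa using hA
  -- all dyadic rationals k/2^m with k < 2^m are good
  have hT0 : I + (0:ℝ) • v ∈ S := by rw [hIv]; exact hI
  have dyadic : ∀ m : ℕ, ∀ k : ℕ, k < 2^m → SegFill.Good S I v ((k : ℝ) / 2^m) := by
    intro m
    induction m with
    | zero =>
      intro k hk
      interval_cases k
      simpa using good0
    | succ m ih =>
      intro k hk
      by_cases hk2 : k < 2^m
      · have h := SegFill.step (s := 0) hclosed hcc hvne (ih k hk2) hT0
        have heq : ((0:ℝ) + (k:ℝ)/2^m)/2 = (k : ℝ) / 2^(m+1) := by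
          rw [pow_succ]; ring
        rwa [heq] at h
      · have hk2' : 2^m ≤ k := Nat.le_of_not_lt hk2
        have hkm : k - 2^m < 2^m := by
          have : k < 2^m + 2^m := by rw [← two_mul, ← pow_succ'] ; exact hk
          omega
        have h := SegFill.step (s := 1) hclosed hcc hvne (ih (k - 2^m) hkm) hT1
        have hcast : ((k - 2^m : ℕ) : ℝ) = (k:ℝ) - 2^m := by
          push_cast [Nat.cast_sub hk2']; ring
        have heq : ((1:ℝ) + ((k - 2^m : ℕ) : ℝ)/2^m)/2 = (k : ℝ) / 2^(m+1) := by
          rw [hcast, pow_succ]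
          field_simp
          ring
        rwa [heq] at h
  have hTdyadic : ∀ m : ℕ, ∀ k : ℕ, k < 2^m → I + ((k:ℝ)/2^m) • v ∈ S :=
    fun m k hk => SegFill.good_mem hclosed (dyadic m k hk)
  have hTclosed : IsClosed {t : ℝ | I + t • v ∈ S} := by
    have hcont : Continuous fun t : ℝ => I + t • v := by continuity
    exact hclosed.preimage hcont
  have hseg : ∀ t : ℝ, 0 ≤ t → t ≤ 1 → I + t • v ∈ S := by
    intro t ht0 ht1
    rcases eq_or_lt_of_le ht1 with rfl | ht1'
    · exact hT1
    have heqc : ∀ m : ℕ, ((⌊t * 2^m⌋.toNat : ℕ) : ℝ) = (⌊t * 2^m⌋ : ℝ) := by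
      intro m
      have hfl : (0:ℤ) ≤ ⌊t * 2^m⌋ := Int.floor_nonneg.2 (by positivity)
      exact_mod_cast congrArg (fun z : ℤ => (z : ℝ)) (Int.toNat_of_nonneg hfl)
    have htend : Filter.Tendsto (fun m : ℕ => (⌊t * 2^m⌋.toNat : ℝ) / 2^m)
        Filter.atTop (nhds t) := by
      have hle : ∀ m : ℕ, t - (1/2)^m ≤ (⌊t * 2^m⌋.toNat : ℝ) / 2^m := by
        intro m
        have h2 : (0:ℝ) < 2^m := by positivity
        have hfl2 : t * 2^m - 1 ≤ (⌊t * 2^m⌋ : ℝ) := by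
          have := Int.sub_one_lt_floor (t * 2^m)
          linarith
        rw [heqc m, le_div_iff₀ h2]
        have hpow : (1/2:ℝ)^m * 2^m = 1 := by
          rw [← mul_pow]; norm_num
        nlinarith
      have hge : ∀ m : ℕ, (⌊t * 2^m⌋.toNat : ℝ) / 2^m ≤ t := by
        intro m
        have h2 : (0:ℝ) < 2^m := by positivity
        rw [heqc m, div_le_iff₀ h2]
        exact Int.floor_le (t * 2^m)
      have hlow : Filter.Tendsto (fun m : ℕ => t - (1/2:ℝ)^m) Filter.atTop (nhds t) := by
        have := tendsto_pow_atTop_nhds_zero_of_lt_one (by norm_num : (0:ℝ) ≤ 1/2)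
          (by norm_num : (1/2:ℝ) < 1)
        simpa using (tendsto_const_nhds.sub this)
      exact tendsto_of_tendsto_of_tendsto_of_le_of_le hlow tendsto_const_nhds hle hge
    have hev : ∀ m : ℕ, (⌊t * 2^m⌋.toNat : ℝ) / 2^m ∈ {t : ℝ | I + t • v ∈ S} := by
      intro m
      have h2 : (0:ℝ) < 2^m := by positivity
      have hk : ⌊t * 2^m⌋.toNat < 2^m := by
        have hfl : (⌊t * 2^m⌋ : ℝ) ≤ t * 2^m := Int.floor_le _
        have hlt : (⌊t * 2^m⌋ : ℝ) < ((2^m : ℕ) : ℝ) := by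
          push_cast
          nlinarith
        have h3 : ⌊t * 2^m⌋ < ((2^m : ℕ) : ℤ) := by exact_mod_cast hlt
        have h4 : ((2:ℤ))^m = ((2^m : ℕ) : ℤ) := by push_cast; ring
        have h5 : 0 < 2^m := by positivity
        omega
      exact hTdyadic m _ hk
    exact hTclosed.mem_of_tendsto htend (Filter.Eventually.of_forall hev)
  intro x hx
  rw [segment_eq_image] at hx
  obtain ⟨θ, hθ, hxeq⟩ := hx
  have hx2 : x = I + (1 - θ) • v := by
    rw [← hxeq, hv]; module
  rw [hx2]
  exact hseg (1 - θ) (by linarith [hθ.2]) (by linarith [hθ.1])
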